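/- The number of permutations p of {1,...,n} such that p(i+1) ≠ p(i) + k for all i with 1 ≤ i ≤ n-1 equals Σ_{j=0}^{n-k} (-1)^j · C(n-k, j) · (n-j)!, for fixed k with 1 ≤ k < n. -/

import Mathlib

open List Finset

namespace DKN

lemma perm_of_nodup_subset {l₁ l₂ : List ℕ} (h₁ : l₁.Nodup) (hs : l₁ ⊆ l₂)
    (hl : l₂.length ≤ l₁.length) : l₁ ~ l₂ :=
  (List.subperm_of_subset h₁ hs).perm_of_length_le hl

/-! ### relabeling maps -/

def emb (c v : ℕ) : ℕ := if v < c then v else v + 1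
def demb (c v : ℕ) : ℕ := if v < c then v else v - 1

lemma demb_emb (c v : ℕ) : demb c (emb c v) = v := by
  simp only [emb, demb]; split_ifs <;> omega

lemma emb_demb {c v : ℕ} (h : v ≠ c) : emb c (demb c v) = v := by
  simp only [emb, demb]; split_ifs <;> omega

lemma emb_ne (c v : ℕ) : emb c v ≠ c := by
  simp only [emb]; split_ifs <;> omega

lemma emb_inj (c : ℕ) : Function.Injective (emb c) := by
  intro a b; simp only [emb]; split_ifs <;> omega

lemma emb_lt_of_lt {c v : ℕ} (h : v < c) : emb c v = v := if_pos h

lemma demb_lt_of_lt {c v : ℕ} (h : v < c) : demb c v = v := if_pos h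

/-! ### insertion after an element -/

def insAfter (a c : ℕ) : List ℕ → List ℕ
  | [] => []
  | x :: xs => if x = a then x :: c :: xs else x :: insAfter a c xs

@[simp] lemma insAfter_nil (a c : ℕ) : insAfter a c [] = [] := rfl

lemma insAfter_cons (a c x : ℕ) (xs : List ℕ) :
    insAfter a c (x :: xs) = if x = a then x :: c :: xs else x :: insAfter a c xs := rfl

lemma insAfter_append_of_not_mem {a : ℕ} (c : ℕ) {u : List ℕ} (v : List ℕ) (h : a ∉ u) :
    insAfter a c (u ++ a :: v) = u ++ a :: c :: v := by
  induction u with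
  | nil => simp [insAfter_cons]
  | cons x xs ih =>
      have hx : x ≠ a := by simp at h; tauto
      have hxs : a ∉ xs := by simp at h; tauto
      simp [insAfter_cons, hx, ih hxs]

lemma perm_insAfter (a c : ℕ) {l : List ℕ} (h : a ∈ l) : insAfter a c l ~ c :: l := by
  induction l with
  | nil => simp at h
  | cons x xs ih =>
      rw [insAfter_cons]
      by_cases hx : x = a
      · simp only [if_pos hx]
        exact List.Perm.swap c x xs
      · simp only [if_neg hx]
        have hm : a ∈ xs := by rcases List.mem_cons.mp h with h' | h'; exact absurd h'.symm hx; exact h'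
        exact ((ih hm).cons x).trans (List.Perm.swap c x xs)

lemma erase_insAfter {a c : ℕ} {l : List ℕ} (hc : c ∉ l) (hac : a ≠ c) :
    (insAfter a c l).erase c = l := by
  induction l with
  | nil => simp
  | cons x xs ih =>
      have hxc : x ≠ c := by simp at hc; tauto
      have hxs : c ∉ xs := by simp at hc; tauto
      rw [insAfter_cons]
      by_cases hx : x = a
      · rw [if_pos hx, List.erase_cons_tail (by simpa using hxc), List.erase_cons_head]
      · rw [if_neg hx, List.erase_cons_tail (by simpa using hxc), ih hxs]

lemma infix_insAfter {x y a c : ℕ} {l : List ℕ} (hxa : x ≠ a) (h : [x, y] <:+: l) :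
    [x, y] <:+: insAfter a c l := by
  induction l with
  | nil => simp at h
  | cons z xs ih =>
      rcases List.infix_cons_iff.mp h with hpre | hinf
      · obtain ⟨t, ht⟩ := hpre
        obtain ⟨rfl, rfl⟩ : z = x ∧ xs = y :: t := by
          simpa using ht.symm
        rw [insAfter_cons, if_neg hxa, insAfter_cons]
        by_cases hy : y = a
        · rw [if_pos hy]
          exact ⟨[], c :: t, rfl⟩
        · rw [if_neg hy]
          exact ⟨[], insAfter a c t, rfl⟩
      · rw [insAfter_cons]
        by_cases hz : z = a
        · rw [if_pos hz]
          exact List.infix_cons_iff.mpr (Or.inr (List.infix_cons_iff.mpr (Or.inr hinf)))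
        · rw [if_neg hz]
          exact List.infix_cons_iff.mpr (Or.inr (ih hinf))

lemma infix_erase {x y c : ℕ} {l : List ℕ} (h : [x, y] <:+: l) (hx : x ≠ c) (hy : y ≠ c) :
    [x, y] <:+: l.erase c := by
  obtain ⟨s, t, rfl⟩ := h
  by_cases hc : c ∈ s
  · rw [List.append_assoc, List.erase_append_left _ hc, ← List.append_assoc]
    exact List.infix_append _ _ _
  · rw [List.append_assoc, List.erase_append_right _ hc]
    have : ([x, y] ++ t).erase c = [x, y] ++ t.erase c := by
      rw [show [x,y] ++ t = x :: y :: t from rfl,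
        List.erase_cons_tail (by simpa using hx), List.erase_cons_tail (by simpa using hy)]
      rfl
    rw [this, ← List.append_assoc]
    exact List.infix_append _ _ _

/-! ### pair infix characterization -/

lemma pair_infix_of_get {a b : ℕ} {l : List ℕ} (i : ℕ) (h : i + 1 < l.length)
    (ha : l[i]'(Nat.lt_of_succ_lt h) = a) (hb : l[i+1]'h = b) : [a, b] <:+: l := by
  have h1 : List.drop i l = a :: b :: List.drop (i+2) l := by
    rw [List.drop_eq_getElem_cons (Nat.lt_of_succ_lt h), ha,
      List.drop_eq_getElem_cons h, hb]
  have hpre : [a, b] <+: List.drop i l := ⟨List.drop (i+2) l, by rw [h1]; rfl⟩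
  exact hpre.isInfix.trans (List.drop_suffix i l).isInfix

lemma get_of_pair_infix {a b : ℕ} {l : List ℕ} (h : [a, b] <:+: l) :
    ∃ i : ℕ, ∃ hi : i + 1 < l.length, l[i]'(Nat.lt_of_succ_lt hi) = a ∧ l[i+1]'hi = b := by
  obtain ⟨s, t, rfl⟩ := h
  have hlen : s.length + 1 < (s ++ [a, b] ++ t).length := by simp
  refine ⟨s.length, hlen, ?_, ?_⟩
  · rw [List.getElem_append_left (by simp), List.getElem_append_right (by simp)]
    simp
  · rw [List.getElem_append_left (by simp), List.getElem_append_right (by simp)]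
    simp

/-! ### the counting finsets -/

def perms (m : ℕ) : Finset (List ℕ) := (List.range m).permutations.toFinset

lemma mem_perms {m : ℕ} {l : List ℕ} : l ∈ perms m ↔ l ~ List.range m := by
  simp [perms, List.mem_permutations]

lemma card_perms (m : ℕ) : (perms m).card = m.factorial := by
  rw [perms, List.toFinset_card_of_nodup (List.nodup_permutations _ (List.nodup_range)),
    List.length_permutations, List.length_range]

def F (k m : ℕ) (S : Finset ℕ) : Finset (List ℕ) :=
  (perms m).filter fun l => ∀ j ∈ S, [j, j + k] <:+: l

lemma mem_F {k m : ℕ} {S : Finset ℕ} {l : List ℕ} :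
    l ∈ F k m S ↔ l ~ List.range m ∧ ∀ j ∈ S, [j, j + k] <:+: l := by
  simp [F, mem_perms]

/-! ### the key bijection -/

lemma card_F_insert (k m j0 : ℕ) (hk : 1 ≤ k) (hj0 : j0 + k < m) (S' : Finset ℕ)
    (hS' : ∀ j ∈ S', j < j0) :
    (F k m (insert j0 S')).card = (F k (m - 1) S').card := by
  set c := j0 + k with hc
  have hj0c : j0 < c := by omega
  have hcm : c < m := hj0
  apply Finset.card_bij' (i := fun l _ => (l.erase c).map (demb c))
    (j := fun l _ => insAfter j0 c (l.map (emb c)))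
  · -- hi : maps into F k (m-1) S'
    intro l hl
    rw [mem_F] at hl ⊢
    obtain ⟨hperm, hcond⟩ := hl
    have hnd : l.Nodup := hperm.nodup_iff.mpr (List.nodup_range)
    have hcl : c ∈ l := hperm.mem_iff.mpr (List.mem_range.mpr hcm)
    have hlen : l.length = m := by rw [hperm.length_eq, List.length_range]
    constructor
    · apply perm_of_nodup_subset
      · apply List.Nodup.map_on _ (hnd.erase c)
        intro x hx y hy hxy
        have hx' := (hnd.mem_erase_iff.mp hx).1
        have hy' := (hnd.mem_erase_iff.mp hy).1
        simp only [demb] at hxy; split_ifs at hxy <;> omega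
      · intro v hv
        obtain ⟨w, hw, rfl⟩ := List.mem_map.mp hv
        have hw1 := (hnd.mem_erase_iff.mp hw).1
        have hw2 : w < m := List.mem_range.mp (hperm.subset (hnd.mem_erase_iff.mp hw).2)
        rw [List.mem_range]
        simp only [demb]; split_ifs <;> omega
      · rw [List.length_range, List.length_map, List.length_erase_of_mem hcl, hlen]
    · intro j hj
      have hjlt : j < j0 := hS' j hj
      have h1 : [j, j + k] <:+: l := hcond j (Finset.mem_insert_of_mem hj)
      have h2 : [j, j + k] <:+: l.erase c := infix_erase h1 (by omega) (by omega)
      have h3 := h2.map (demb c)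
      rwa [List.map_cons, List.map_cons, List.map_nil, demb_lt_of_lt (by omega),
        demb_lt_of_lt (by omega)] at h3
  · -- hj : maps into F k m (insert j0 S')
    intro l hl
    rw [mem_F] at hl ⊢
    obtain ⟨hperm, hcond⟩ := hl
    have hnd : l.Nodup := hperm.nodup_iff.mpr (List.nodup_range)
    have hlen : l.length = m - 1 := by rw [hperm.length_eq, List.length_range]
    have hj0l : j0 ∈ l := hperm.mem_iff.mpr (List.mem_range.mpr (by omega))
    have hj0map : j0 ∈ l.map (emb c) :=
      List.mem_map.mpr ⟨j0, hj0l, emb_lt_of_lt hj0c⟩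
    have hmapnd : (l.map (emb c)).Nodup := hnd.map (emb_inj c)
    have hperm2 : insAfter j0 c (l.map (emb c)) ~ c :: l.map (emb c) :=
      perm_insAfter j0 c hj0map
    constructor
    · refine hperm2.trans (perm_of_nodup_subset ?_ ?_ ?_)
      · exact List.nodup_cons.mpr ⟨fun hmem => by
          obtain ⟨w, _, hw⟩ := List.mem_map.mp hmem
          exact emb_ne c w hw, hmapnd⟩
      · intro v hv
        rcases List.mem_cons.mp hv with rfl | hv
        · exact List.mem_range.mpr hcm
        · obtain ⟨w, hw, rfl⟩ := List.mem_map.mp hv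
          have : w < m - 1 := List.mem_range.mp (hperm.subset hw)
          rw [List.mem_range]
          simp only [emb]; split_ifs <;> omega
      · simp [hlen, List.length_range]; omega
    · intro j hj
      by_cases hjeq : j = j0
      · -- the new pair [j0, c]
        rw [hjeq, ← hc]
        obtain ⟨s, t, hst⟩ := List.append_of_mem hj0map
        have hns : j0 ∉ s := by
          have := hmapnd
          rw [hst] at this
          exact fun hmem => (List.disjoint_of_nodup_append this hmem) List.mem_cons_self
        rw [hst, insAfter_append_of_not_mem c t hns]
        exact ⟨s, t, by simp⟩
      · have hj' : j ∈ S' := (Finset.mem_insert.mp hj).resolve_left hjeq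
        have hjlt : j < j0 := hS' j hj'
        have h1 := (hcond j hj').map (emb c)
        rw [List.map_cons, List.map_cons, List.map_nil, emb_lt_of_lt (by omega),
          emb_lt_of_lt (by omega)] at h1
        exact infix_insAfter (by omega) h1
  ·
    intro l hl
    rw [mem_F] at hl
    obtain ⟨hperm, hcond⟩ := hl
    have hnd : l.Nodup := hperm.nodup_iff.mpr (List.nodup_range)
    -- Φ (Ψ l) = l
    obtain ⟨s, t, hst⟩ := hcond j0 (Finset.mem_insert_self _ _)
    have hst' : l = s ++ j0 :: c :: t := by rw [← hst]; simp; exact hc.symm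
    have hndl := hnd; rw [hst'] at hndl
    have hcs : c ∉ s ++ [j0] := by
      intro hmem
      have : l = (s ++ [j0]) ++ c :: t := by rw [hst']; simp
      rw [this] at hnd
      exact (List.disjoint_of_nodup_append hnd hmem) List.mem_cons_self
    have hj0s : j0 ∉ s := by
      intro hmem
      rw [hst'] at hnd
      exact (List.disjoint_of_nodup_append hnd hmem) List.mem_cons_self
    have herase : l.erase c = s ++ j0 :: t := by
      rw [hst', show s ++ j0 :: c :: t = (s ++ [j0]) ++ c :: t by simp,
        List.erase_append_right _ hcs, List.erase_cons_head]
      simp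
    have hmapmap : ((l.erase c).map (demb c)).map (emb c) = l.erase c := by
      rw [List.map_map]
      refine (List.map_congr_left fun a ha => ?_).trans (List.map_id _)
      have hac : a ≠ c := (hnd.mem_erase_iff.mp ha).1
      exact emb_demb hac
    rw [hmapmap, herase, insAfter_append_of_not_mem c t hj0s, ← hst']
  · -- right inverse : Φ then Ψ = id
    intro l hl
    rw [mem_F] at hl
    obtain ⟨hperm, _⟩ := hl
    have hnd : l.Nodup := hperm.nodup_iff.mpr (List.nodup_range)
    have hcmap : c ∉ l.map (emb c) := fun hmem => by
      obtain ⟨w, _, hw⟩ := List.mem_map.mp hmem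
      exact emb_ne c w hw
    rw [erase_insAfter hcmap (by omega), List.map_map]
    refine (List.map_congr_left fun a _ => demb_emb c a).trans (List.map_id _)

/-! ### counting F -/

lemma card_F (k : ℕ) (hk : 1 ≤ k) :
    ∀ (N m : ℕ) (S : Finset ℕ), S.card = N → (∀ j ∈ S, j + k < m) →
      (F k m S).card = (m - N).factorial := by
  intro N
  induction N with
  | zero =>
      intro m S hcard _
      rw [Finset.card_eq_zero] at hcard
      subst hcard
      rw [show F k m ∅ = perms m by simp [F], card_perms, Nat.sub_zero]
  | succ N ih =>
      intro m S hcard hS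
      have hne : S.Nonempty := Finset.card_pos.mp (by omega)
      set j0 := S.max' hne with hj0
      have hj0m : j0 + k < m := hS j0 (S.max'_mem hne)
      have hm1 : 1 ≤ m := by omega
      have hS' : ∀ j ∈ S.erase j0, j < j0 := fun j hj =>
        lt_of_le_of_ne (S.le_max' j (Finset.mem_of_mem_erase hj)) (Finset.ne_of_mem_erase hj)
      have hins : insert j0 (S.erase j0) = S := Finset.insert_erase (S.max'_mem hne)
      rw [← hins, card_F_insert k m j0 hk hj0m _ hS',
        ih (m - 1) (S.erase j0) (by rw [Finset.card_erase_of_mem (S.max'_mem hne), hcard]; rfl)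
          (fun j hj => by have := hS j (Finset.mem_of_mem_erase hj); have := hS' j hj; omega)]
      congr 1
      omega

/-! ### inclusion–exclusion -/

def G (k n : ℕ) : Finset (List ℕ) :=
  (perms n).filter fun l => ∀ j ∈ Finset.range (n - k), ¬ [j, j + k] <:+: l

lemma card_G (k n : ℕ) :
    ((G k n).card : ℤ) =
      ∑ S ∈ (Finset.range (n - k)).powerset, (-1 : ℤ) ^ S.card * (F k n S).card := by
  have h1 : ∀ S : Finset ℕ, ((F k n S).card : ℤ) =
      ∑ l ∈ perms n, (if ∀ j ∈ S, [j, j + k] <:+: l then 1 else 0) := by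
    intro S
    rw [F, Finset.card_filter]
    push_cast
    rfl
  rw [Finset.sum_congr rfl (fun S _ => by rw [h1 S, Finset.mul_sum] :
    ∀ S ∈ (Finset.range (n - k)).powerset, _ = _), Finset.sum_comm]
  rw [G, Finset.card_filter]
  push_cast
  refine Finset.sum_congr rfl fun l _ => ?_
  set T : Finset ℕ := (Finset.range (n - k)).filter (fun j => [j, j + k] <:+: l) with hT
  have hTsub : T ⊆ Finset.range (n - k) := Finset.filter_subset _ _
  have step1 : ∀ S ∈ (Finset.range (n - k)).powerset,
      (-1 : ℤ) ^ S.card * (if ∀ j ∈ S, [j, j + k] <:+: l then 1 else 0)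
      = (-1 : ℤ) ^ S.card * (if S ⊆ T then 1 else 0) := by
    intro S hS
    rw [Finset.mem_powerset] at hS
    congr 1
    apply if_congr _ rfl rfl
    constructor
    · intro h j hj
      rw [hT, Finset.mem_filter]
      exact ⟨hS hj, h j hj⟩
    · intro h j hj
      exact (Finset.mem_filter.mp (h hj)).2
  rw [Finset.sum_congr rfl step1]
  have step2 : ∑ S ∈ (Finset.range (n - k)).powerset,
      (-1 : ℤ) ^ S.card * (if S ⊆ T then 1 else 0)
      = ∑ S ∈ T.powerset, (-1 : ℤ) ^ S.card := by
    rw [← Finset.sum_subset (Finset.powerset_mono.mpr hTsub)]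
    · apply Finset.sum_congr rfl
      intro S hS
      rw [Finset.mem_powerset] at hS
      rw [if_pos hS, mul_one]
    · intro S _ hS
      rw [Finset.mem_powerset] at hS
      rw [if_neg hS, mul_zero]
  rw [step2, Finset.sum_powerset_neg_one_pow_card]
  have hiff : (∀ j ∈ Finset.range (n - k), ¬ [j, j + k] <:+: l) ↔ T = ∅ := by
    rw [hT, Finset.filter_eq_empty_iff]
  exact if_congr hiff rfl rfl

/-! ### the combinatorial core, assembled -/

lemma card_G_eq (n k : ℕ) (hk : 1 ≤ k) (hkn : k < n) :
    ((G k n).card : ℤ) =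
      ∑ j ∈ Finset.range (n - k + 1),
        (-1 : ℤ) ^ j * (n - k).choose j * (n - j).factorial := by
  rw [card_G]
  have hA : ∀ S ∈ (Finset.range (n - k)).powerset,
      (-1 : ℤ) ^ S.card * (F k n S).card = (-1 : ℤ) ^ S.card * (n - S.card).factorial := by
    intro S hS
    rw [Finset.mem_powerset] at hS
    rw [card_F k hk S.card n S rfl (fun j hj => by
      have := Finset.mem_range.mp (hS hj); omega)]
  rw [Finset.sum_congr rfl hA, Finset.sum_powerset]
  rw [Finset.card_range]
  refine Finset.sum_congr rfl fun j hj => ?_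
  have : ∀ S ∈ Finset.powersetCard j (Finset.range (n - k)),
      (-1 : ℤ) ^ S.card * (n - S.card).factorial = (-1 : ℤ) ^ j * (n - j).factorial := by
    intro S hS
    rw [(Finset.mem_powersetCard.mp hS).2]
  rw [Finset.sum_congr rfl this, Finset.sum_const, Finset.card_powersetCard, Finset.card_range,
    nsmul_eq_mul]
  push_cast
  ring

/-! ### bijection with permutations -/

lemma mem_G_of {n k : ℕ} (p : Equiv.Perm (Fin n))
    (hp : ∀ i : Fin n, ∀ h : (i : ℕ) + 1 < n,
        ((p ⟨(i : ℕ) + 1, h⟩ : Fin n) : ℕ) ≠ (p i : ℕ) + k) :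
    List.ofFn (fun i => ((p i : ℕ))) ∈ G k n := by
  have hmem : List.ofFn (fun i => ((p i : ℕ))) ∈ perms n := by
    rw [mem_perms]
    apply perm_of_nodup_subset
    · exact List.nodup_ofFn.mpr (Fin.val_injective.comp p.injective)
    · intro v hv
      obtain ⟨i, hi⟩ := List.mem_ofFn.mp hv
      rw [List.mem_range, ← hi]
      exact (p i).isLt
    · simp
  rw [G, Finset.mem_filter]
  refine ⟨hmem, fun j hj hinf => ?_⟩
  obtain ⟨i, hi, ha, hb⟩ := get_of_pair_infix hinf
  rw [List.length_ofFn] at hi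
  rw [List.getElem_ofFn] at ha hb
  exact hp ⟨i, by omega⟩ (by simpa using hi) (by rw [hb, ha])

lemma card_subtype (n k : ℕ) (hkn : k < n) :
    Nat.card {p : Equiv.Perm (Fin n) //
        ∀ i : Fin n, ∀ h : (i : ℕ) + 1 < n,
          ((p ⟨(i : ℕ) + 1, h⟩ : Fin n) : ℕ) ≠ (p i : ℕ) + k} = (G k n).card := by
  rw [← Nat.card_eq_finsetCard (G k n)]
  apply Nat.card_eq_of_bijective
    (f := fun x => (⟨List.ofFn (fun i => ((x.1 i : ℕ))), mem_G_of x.1 x.2⟩ : {l // l ∈ G k n}))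
  constructor
  · rintro ⟨p, hp⟩ ⟨q, hq⟩ h
    simp only [Subtype.mk.injEq] at h
    have := List.ofFn_injective h
    apply Subtype.ext
    apply Equiv.ext
    intro i
    exact Fin.val_injective (congrFun this i)
  · rintro ⟨l, hl⟩
    have hl' := hl
    rw [G, Finset.mem_filter] at hl'
    obtain ⟨hmem, hcond⟩ := hl'
    have hperm : l ~ List.range n := mem_perms.mp hmem
    have hlen : l.length = n := by rw [hperm.length_eq, List.length_range]
    have hnd : l.Nodup := hperm.nodup_iff.mpr (List.nodup_range)
    have hlt : ∀ i : ℕ, i < n → ∀ hi : i < l.length, l[i]'hi < n := fun i _ hi =>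
      List.mem_range.mp (hperm.subset (List.getElem_mem hi))
    have hfinj : Function.Injective
        (fun i : Fin n => (⟨l[(i : ℕ)]'(by omega), hlt i i.isLt (by omega)⟩ : Fin n)) := by
      intro a b hab
      have : l[(a : ℕ)]'(by omega) = l[(b : ℕ)]'(by omega) := congrArg Fin.val hab
      exact Fin.ext ((hnd.getElem_inj_iff).mp this)
    refine ⟨⟨Equiv.ofBijective _ (Finite.injective_iff_bijective.mp hfinj), ?_⟩, ?_⟩
    · intro i h heq
      simp only [Equiv.ofBijective_apply] at heq
      have hjk : l[(i : ℕ) + 1]'(by omega) = l[(i : ℕ)]'(by omega) + k := heq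
      have hjn : l[(i : ℕ)]'(by omega) + k < n := by
        rw [← hjk]; exact hlt _ (by omega) (by omega)
      refine hcond _ (Finset.mem_range.mpr (by omega) :
        l[(i : ℕ)]'(by omega) ∈ Finset.range (n - k)) ?_
      exact pair_infix_of_get (i : ℕ) (by omega) rfl hjk
    · apply Subtype.ext
      apply List.ext_getElem (by simp [hlen])
      intro i h1 h2
      rw [List.getElem_ofFn]
      rfl

end DKN

/-- The number of permutations `p` of `{1,...,n}` with no `k`-succession
(`p(i+1) ≠ p(i) + k` for `1 ≤ i ≤ n-1`) equals `∑_{j=0}^{n-k} (-1)^j C(n-k,j) (n-j)!`.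
Values are 0-indexed: Fin-element `v` represents the value `v+1`. -/
theorem d_k_n_formula (n k : ℕ) (hk : 1 ≤ k) (hkn : k < n) :
    (Nat.card {p : Equiv.Perm (Fin n) //
        ∀ i : Fin n, ∀ h : (i : ℕ) + 1 < n,
          ((p ⟨(i : ℕ) + 1, h⟩ : Fin n) : ℕ) ≠ (p i : ℕ) + k} : ℤ) =
      ∑ j ∈ Finset.range (n - k + 1),
        (-1 : ℤ) ^ j * (n - k).choose j * (n - j).factorial := by
  rw [DKN.card_subtype n k hkn]
  exact DKN.card_G_eq n k hk hkn
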